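/- Let H = (V, E, w) be a hypergraph and f ∈ ℝⁿ a nonzero vector with D(f) = γ. Then there exist disjoint sets L, R ⊆ V, not both empty, with bipartiteness ratio β_H(L,R) ≤ √(2γ). -/

import Mathlib

open scoped Classical

/-- `w(A,B|C)`: total weight of hyperedges intersecting both `A` and `B` and avoiding `C`. -/
noncomputable def cutw {V : Type*} [DecidableEq V] (E : Finset (Finset V))
    (w : Finset V → ℝ) (A B C : Finset V) : ℝ :=
  ∑ e ∈ E, if (e ∩ A).Nonempty ∧ (e ∩ B).Nonempty ∧ e ∩ C = ∅ then w e else 0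

/-- Degree of a vertex in a weighted hypergraph. -/
noncomputable def degH {V : Type*} (E : Finset (Finset V)) (w : Finset V → ℝ) (v : V) : ℝ :=
  ∑ e ∈ E, if v ∈ e then w e else 0

/-- Volume of a vertex set. -/
noncomputable def volH {V : Type*} (E : Finset (Finset V)) (w : Finset V → ℝ)
    (S : Finset V) : ℝ :=
  ∑ v ∈ S, degH E w v

/-- The hypergraph bipartiteness ratio `β_H(L,R)`. -/
noncomputable def betaH {V : Type*} [Fintype V] [DecidableEq V] (E : Finset (Finset V))
    (w : Finset V → ℝ) (L R : Finset V) : ℝ :=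
  (2 * cutw E w L L Lᶜ + 2 * cutw E w R R Rᶜ +
      cutw E w L (L ∪ R)ᶜ R + cutw E w R (L ∪ R)ᶜ L) / volH E w (L ∪ R)

/-- The discrepancy ratio `D(f)` of a hypergraph, given a proof that edges are nonempty. -/
noncomputable def discH {V : Type*} (E : Finset (Finset V)) (w : Finset V → ℝ)
    (hE : ∀ e ∈ E, e.Nonempty) (deg : V → ℝ) [Fintype V] (f : V → ℝ) : ℝ :=
  (∑ e ∈ E.attach, w e.1 * (e.1.sup' (hE e.1 e.2) f + e.1.inf' (hE e.1 e.2) f) ^ 2) /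
    (∑ v, deg v * f v ^ 2)

open Finset

/-- Predecessor of `t` in the grid `{0} ∪ T`. -/
noncomputable def prevT (T : Finset ℝ) (t : ℝ) : ℝ :=
  if h : (((insert (0:ℝ) T)).filter (· < t)).Nonempty then
    (((insert (0:ℝ) T)).filter (· < t)).max' h else 0

lemma prevT_filter_ne {T : Finset ℝ} {t : ℝ} (ht : 0 < t) :
    (((insert (0:ℝ) T)).filter (· < t)).Nonempty :=
  ⟨0, by simp [ht]⟩

lemma prevT_eq {T : Finset ℝ} {t : ℝ} (ht : 0 < t) :
    prevT T t = (((insert (0:ℝ) T)).filter (· < t)).max' (prevT_filter_ne ht) := by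
  rw [prevT, dif_pos (prevT_filter_ne ht)]

lemma prevT_lt {T : Finset ℝ} {t : ℝ} (ht : 0 < t) : prevT T t < t := by
  rw [prevT_eq ht]
  have := (((insert (0:ℝ) T)).filter (· < t)).max'_mem (prevT_filter_ne ht)
  exact (mem_filter.1 this).2

lemma prevT_mem {T : Finset ℝ} {t : ℝ} (ht : 0 < t) :
    prevT T t ∈ insert (0:ℝ) T := by
  rw [prevT_eq ht]
  have := (((insert (0:ℝ) T)).filter (· < t)).max'_mem (prevT_filter_ne ht)
  exact (mem_filter.1 this).1

lemma le_prevT {T : Finset ℝ} {t s : ℝ} (ht : 0 < t) (hs : s ∈ insert (0:ℝ) T)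
    (h : s < t) : s ≤ prevT T t := by
  rw [prevT_eq ht]
  apply le_max'
  exact mem_filter.2 ⟨hs, h⟩

lemma prevT_nonneg {T : Finset ℝ} {t : ℝ} (ht : 0 < t) : 0 ≤ prevT T t :=
  le_prevT ht (mem_insert_self _ _) ht

/-- Telescoping sum over the grid. -/
lemma telescope1 (T : Finset ℝ) (hT : ∀ t ∈ T, 0 < t) :
    ∀ β ∈ insert (0:ℝ) T, ∑ t ∈ T.filter (· ≤ β), (t - prevT T t) = β := by
  induction T using Finset.strongInduction with
  | _ T ih =>
    intro β hβ
    by_cases hemp : (T.filter (· ≤ β)).Nonempty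
    · set M := (T.filter (· ≤ β)).max' hemp with hMdef
      have hMm := (T.filter (· ≤ β)).max'_mem hemp
      have hMT : M ∈ T := (mem_filter.1 hMm).1
      have hMβ : M ≤ β := (mem_filter.1 hMm).2
      have hM0 : 0 < M := hT M hMT
      have hβM : β = M := by
        rcases mem_insert.1 hβ with h0 | hβT
        · exfalso; obtain ⟨x, hx⟩ := hemp
          have := hT x (mem_filter.1 hx).1
          have := (mem_filter.1 hx).2
          linarith [h0 ▸ this]
        · refine le_antisymm ?_ hMβ
          apply le_max'
          exact mem_filter.2 ⟨hβT, le_refl β⟩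
      set β' := prevT T M with hβ'def
      have hβ'M : β' < M := prevT_lt hM0
      have hβ'mem : β' ∈ insert (0:ℝ) T := prevT_mem hM0
      have hβ'ne : β' ≠ M := ne_of_lt hβ'M
      have hβ'mem' : β' ∈ insert (0:ℝ) (T.erase M) := by
        rcases mem_insert.1 hβ'mem with h | h
        · exact mem_insert.2 (Or.inl h)
        · exact mem_insert.2 (Or.inr (mem_erase.2 ⟨hβ'ne, h⟩))
      -- prevT agrees on the erased set for small t
      have hprev : ∀ t ∈ (T.erase M).filter (· ≤ β'), prevT (T.erase M) t = prevT T t := by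
        intro t htm
        have htT : t ∈ T := mem_of_mem_erase (mem_filter.1 htm).1
        have ht0 : 0 < t := hT t htT
        have hfil : (insert (0:ℝ) (T.erase M)).filter (· < t)
            = (insert (0:ℝ) T).filter (· < t) := by
          apply Finset.ext
          intro s
          simp only [mem_filter, mem_insert, mem_erase]
          constructor
          · rintro ⟨h1 | ⟨_, h1⟩, h2⟩ <;> exact ⟨by tauto, h2⟩
          · rintro ⟨h1, h2⟩
            refine ⟨?_, h2⟩
            rcases h1 with h1 | h1
            · exact Or.inl h1
            · right
              refine ⟨?_, h1⟩
              have : t ≤ β' := (mem_filter.1 htm).2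
              intro he; subst he; linarith
        rw [prevT, prevT, hfil]
      -- the filtered set splits
      have hsplit : T.filter (· ≤ β) = insert M ((T.erase M).filter (· ≤ β')) := by
        apply Finset.ext
        intro t
        simp only [mem_filter, mem_insert, mem_erase]
        constructor
        · rintro ⟨htT, htβ⟩
          by_cases htM : t = M
          · exact Or.inl htM
          · right
            refine ⟨⟨htM, htT⟩, ?_⟩
            have htle : t ≤ M := by
              apply le_max'
              exact mem_filter.2 ⟨htT, htβ⟩
            exact le_prevT hM0 (mem_insert.2 (Or.inr htT)) (lt_of_le_of_ne htle htM)
        · rintro (h | ⟨⟨_, htT⟩, htβ'⟩)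
          · subst h; exact ⟨hMT, hMβ⟩
          · exact ⟨htT, le_trans htβ' (le_trans (le_of_lt hβ'M) hMβ)⟩
      have hMnot : M ∉ (T.erase M).filter (· ≤ β') := by
        simp [mem_filter]
      have ihres := ih (T.erase M) (erase_ssubset hMT)
        (fun t ht => hT t (mem_of_mem_erase ht)) β' hβ'mem'
      have hsum : ∑ x ∈ (T.erase M).filter (· ≤ β'), (x - prevT T x) = β' := by
        refine Eq.trans (Finset.sum_congr rfl (fun t ht => ?_)) ihres
        rw [hprev t ht]
      rw [hsplit, sum_insert hMnot, hsum, hβM]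
      ring
    · rw [not_nonempty_iff_eq_empty] at hemp
      rw [hemp, sum_empty]
      rcases mem_insert.1 hβ with h0 | hβT
      · exact h0.symm
      · exfalso
        have : β ∈ T.filter (· ≤ β) := mem_filter.2 ⟨hβT, le_refl β⟩
        simp [hemp] at this

lemma telescope2 (T : Finset ℝ) (hT : ∀ t ∈ T, 0 < t) {α β : ℝ}
    (hα : α ∈ insert (0:ℝ) T) (hβ : β ∈ insert (0:ℝ) T) (hαβ : α ≤ β) :
    ∑ t ∈ T.filter (fun t => α < t ∧ t ≤ β), (t - prevT T t) = β - α := by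
  have h1 := telescope1 T hT β hβ
  have h2 := telescope1 T hT α hα
  have hsplit := Finset.sum_filter_add_sum_filter_not (T.filter (· ≤ β)) (· ≤ α)
    (fun t => t - prevT T t)
  have e1 : (T.filter (· ≤ β)).filter (· ≤ α) = T.filter (· ≤ α) := by
    apply Finset.ext; intro t
    simp only [mem_filter]
    exact ⟨fun ⟨⟨h, _⟩, h3⟩ => ⟨h, h3⟩, fun ⟨h, h3⟩ => ⟨⟨h, le_trans h3 hαβ⟩, h3⟩⟩
  have e2 : (T.filter (· ≤ β)).filter (fun t => ¬ t ≤ α) = T.filter (fun t => α < t ∧ t ≤ β) := by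
    apply Finset.ext; intro t
    simp only [mem_filter, not_le]
    tauto
  rw [e1, e2, h2] at hsplit
  linarith

section Hyp

variable {V : Type*} [Fintype V] [DecidableEq V]

/-- Sweep set of negative vertices at threshold `t`. -/
noncomputable def Lset (f : V → ℝ) (t : ℝ) : Finset V :=
  univ.filter (fun v => f v < 0 ∧ t ≤ f v ^ 2)

/-- Sweep set of positive vertices at threshold `t`. -/
noncomputable def Rset (f : V → ℝ) (t : ℝ) : Finset V :=
  univ.filter (fun v => 0 < f v ∧ t ≤ f v ^ 2)

/-- The contribution of edge `e` to the bipartiteness numerator at threshold `t`. -/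
noncomputable def edgeInd (f : V → ℝ) (e : Finset V) (t : ℝ) : ℝ :=
  (if (e ∩ Lset f t).Nonempty ∧ (e ∩ Lset f t).Nonempty ∧ e ∩ (Lset f t)ᶜ = ∅ then 2 else 0) +
  (if (e ∩ Rset f t).Nonempty ∧ (e ∩ Rset f t).Nonempty ∧ e ∩ (Rset f t)ᶜ = ∅ then 2 else 0) +
  (if (e ∩ Lset f t).Nonempty ∧ (e ∩ (Lset f t ∪ Rset f t)ᶜ).Nonempty ∧ e ∩ Rset f t = ∅
    then 1 else 0) +
  (if (e ∩ Rset f t).Nonempty ∧ (e ∩ (Lset f t ∪ Rset f t)ᶜ).Nonempty ∧ e ∩ Lset f t = ∅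
    then 1 else 0)

lemma mem_Lset {f : V → ℝ} {t : ℝ} {v : V} : v ∈ Lset f t ↔ f v < 0 ∧ t ≤ f v ^ 2 := by
  simp [Lset]

lemma mem_Rset {f : V → ℝ} {t : ℝ} {v : V} : v ∈ Rset f t ↔ 0 < f v ∧ t ≤ f v ^ 2 := by
  simp [Rset]

variable {f : V → ℝ} {t : ℝ} {e : Finset V}

lemma L_inter_nonempty (he : e.Nonempty) :
    (e ∩ Lset f t).Nonempty ↔ (e.inf' he f < 0 ∧ t ≤ (e.inf' he f) ^ 2) := by
  constructor
  · rintro ⟨v, hv⟩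
    rw [mem_inter, mem_Lset] at hv
    obtain ⟨hve, hfv, ht⟩ := hv
    have hb : e.inf' he f ≤ f v := inf'_le f hve
    constructor
    · linarith
    · nlinarith
  · rintro ⟨hb, ht⟩
    obtain ⟨u, hu, hub⟩ := exists_mem_eq_inf' he f
    exact ⟨u, mem_inter.2 ⟨hu, mem_Lset.2 ⟨hub ▸ hb, hub ▸ ht⟩⟩⟩

lemma R_inter_nonempty (he : e.Nonempty) :
    (e ∩ Rset f t).Nonempty ↔ (0 < e.sup' he f ∧ t ≤ (e.sup' he f) ^ 2) := by
  constructor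
  · rintro ⟨v, hv⟩
    rw [mem_inter, mem_Rset] at hv
    obtain ⟨hve, hfv, ht⟩ := hv
    have ha : f v ≤ e.sup' he f := le_sup' f hve
    constructor
    · linarith
    · nlinarith
  · rintro ⟨ha, ht⟩
    obtain ⟨u, hu, hua⟩ := exists_mem_eq_sup' he f
    exact ⟨u, mem_inter.2 ⟨hu, mem_Rset.2 ⟨hua ▸ ha, hua ▸ ht⟩⟩⟩

lemma L_inter_compl_empty (he : e.Nonempty) :
    e ∩ (Lset f t)ᶜ = ∅ ↔ (e.sup' he f < 0 ∧ t ≤ e.inf' he (fun v => f v ^ 2)) := by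
  have h1 : e ∩ (Lset f t)ᶜ = ∅ ↔ ∀ v ∈ e, v ∈ Lset f t := by
    constructor
    · intro h v hv
      by_contra hc
      exact (eq_empty_iff_forall_notMem.1 h v) (mem_inter.2 ⟨hv, mem_compl.2 hc⟩)
    · intro h
      apply eq_empty_iff_forall_notMem.2
      intro v hv
      rw [mem_inter, mem_compl] at hv
      exact hv.2 (h v hv.1)
  rw [h1]
  simp only [mem_Lset]
  rw [show (e.sup' he f < 0 ∧ t ≤ e.inf' he (fun v => f v ^ 2)) ↔
      ((∀ v ∈ e, f v < 0) ∧ (∀ v ∈ e, t ≤ f v ^ 2)) by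
    rw [Finset.sup'_lt_iff, Finset.le_inf'_iff]]
  constructor
  · intro h
    exact ⟨fun v hv => (h v hv).1, fun v hv => (h v hv).2⟩
  · intro h v hv
    exact ⟨h.1 v hv, h.2 v hv⟩

lemma R_inter_compl_empty (he : e.Nonempty) :
    e ∩ (Rset f t)ᶜ = ∅ ↔ (0 < e.inf' he f ∧ t ≤ e.inf' he (fun v => f v ^ 2)) := by
  have h1 : e ∩ (Rset f t)ᶜ = ∅ ↔ ∀ v ∈ e, v ∈ Rset f t := by
    constructor
    · intro h v hv
      by_contra hc
      exact (eq_empty_iff_forall_notMem.1 h v) (mem_inter.2 ⟨hv, mem_compl.2 hc⟩)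
    · intro h
      apply eq_empty_iff_forall_notMem.2
      intro v hv
      rw [mem_inter, mem_compl] at hv
      exact hv.2 (h v hv.1)
  rw [h1]
  simp only [mem_Rset]
  rw [show (0 < e.inf' he f ∧ t ≤ e.inf' he (fun v => f v ^ 2)) ↔
      ((∀ v ∈ e, 0 < f v) ∧ (∀ v ∈ e, t ≤ f v ^ 2)) by
    rw [Finset.lt_inf'_iff, Finset.le_inf'_iff]]
  constructor
  · intro h
    exact ⟨fun v hv => (h v hv).1, fun v hv => (h v hv).2⟩
  · intro h v hv
    exact ⟨h.1 v hv, h.2 v hv⟩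

lemma mid_inter_nonempty (he : e.Nonempty) (ht : 0 < t) :
    (e ∩ (Lset f t ∪ Rset f t)ᶜ).Nonempty ↔ e.inf' he (fun v => f v ^ 2) < t := by
  have key : ∀ v, v ∈ (Lset f t ∪ Rset f t)ᶜ ↔ f v ^ 2 < t := by
    intro v
    rw [mem_compl, mem_union, mem_Lset, mem_Rset]
    constructor
    · intro h
      by_contra hc
      push_neg at hc
      rcases lt_trichotomy (f v) 0 with h0 | h0 | h0
      · exact h (Or.inl ⟨h0, hc⟩)
      · rw [h0] at hc; simpa using lt_of_lt_of_le ht hc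
      · exact h (Or.inr ⟨h0, hc⟩)
    · intro h hc
      rcases hc with ⟨_, h2⟩ | ⟨_, h2⟩ <;> linarith
  constructor
  · rintro ⟨v, hv⟩
    rw [mem_inter, key] at hv
    calc e.inf' he (fun v => f v ^ 2) ≤ f v ^ 2 := inf'_le _ hv.1
    _ < t := hv.2
  · intro h
    rw [Finset.inf'_lt_iff] at h
    obtain ⟨v, hv, hvt⟩ := h
    exact ⟨v, mem_inter.2 ⟨hv, (key v).2 hvt⟩⟩

lemma R_inter_empty (he : e.Nonempty) :
    e ∩ Rset f t = ∅ ↔ ¬(0 < e.sup' he f ∧ t ≤ (e.sup' he f) ^ 2) := by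
  rw [← R_inter_nonempty he, Finset.not_nonempty_iff_eq_empty]

lemma L_inter_empty (he : e.Nonempty) :
    e ∩ Lset f t = ∅ ↔ ¬(e.inf' he f < 0 ∧ t ≤ (e.inf' he f) ^ 2) := by
  rw [← L_inter_nonempty he, Finset.not_nonempty_iff_eq_empty]

end Hyp

set_option linter.unusedSectionVars false

lemma helperA (T : Finset ℝ) (hT : ∀ t ∈ T, 0 < t) {β : ℝ}
    (hβ : β ∈ insert (0:ℝ) T) (c : ℝ) :
    ∑ t ∈ T, (t - prevT T t) * (if t ≤ β then c else 0) = c * β := by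
  simp only [mul_ite, mul_zero]
  rw [← Finset.sum_filter, ← Finset.sum_mul, telescope1 T hT β hβ]
  ring

lemma helperB (T : Finset ℝ) (hT : ∀ t ∈ T, 0 < t) {α β : ℝ}
    (hα : α ∈ insert (0:ℝ) T) (hβ : β ∈ insert (0:ℝ) T) (hαβ : α ≤ β) (c : ℝ) :
    ∑ t ∈ T, (t - prevT T t) * (if α < t ∧ t ≤ β then c else 0) = c * (β - α) := by
  simp only [mul_ite, mul_zero]
  rw [← Finset.sum_filter, ← Finset.sum_mul, telescope2 T hT hα hβ hαβ]
  ring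

lemma helperC (T : Finset ℝ) {α β : ℝ} (hβα : β < α) (c : ℝ) :
    ∑ t ∈ T, (t - prevT T t) * (if α < t ∧ t ≤ β then c else 0) = 0 := by
  apply Finset.sum_eq_zero
  intro t ht
  have : ¬ (α < t ∧ t ≤ β) := by rintro ⟨h1, h2⟩; linarith
  rw [if_neg this, mul_zero]

lemma helper0 (T : Finset ℝ) {P : ℝ → Prop} [DecidablePred P] (hP : ∀ t ∈ T, ¬ P t) (c : ℝ) :
    ∑ t ∈ T, (t - prevT T t) * (if P t then c else 0) = 0 := by
  apply Finset.sum_eq_zero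
  intro t ht
  rw [if_neg (hP t ht), mul_zero]

set_option maxHeartbeats 1000000 in
lemma per_edge {V : Type*} [Fintype V] [DecidableEq V] (f : V → ℝ) (T : Finset ℝ)
    (hTdef : T = (Finset.univ.image (fun v => f v ^ 2)).filter (fun t => 0 < t))
    (e : Finset V) (he : e.Nonempty) :
    ∑ t ∈ T, (t - prevT T t) * edgeInd f e t ≤
      |e.sup' he f + e.inf' he f| * Real.sqrt (2 * ∑ v ∈ e, f v ^ 2) := by
  have hT : ∀ t ∈ T, 0 < t := by
    intro t ht; rw [hTdef] at ht; exact (Finset.mem_filter.1 ht).2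
  obtain ⟨ua, hua, haeq⟩ := exists_mem_eq_sup' he f
  obtain ⟨ub, hub, hbeq⟩ := exists_mem_eq_inf' he f
  obtain ⟨um, hum, hmeq⟩ := exists_mem_eq_inf' he (fun v => f v ^ 2)
  set a := e.sup' he f with hadef
  set b := e.inf' he f with hbdef
  set m := e.inf' he (fun v => f v ^ 2) with hmdef
  set σ := ∑ v ∈ e, f v ^ 2 with hσdef
  set s2 := Real.sqrt (2 * σ) with hs2def
  have hgrid : ∀ v : V, f v ^ 2 ∈ insert (0:ℝ) T := by
    intro v
    rcases eq_or_lt_of_le (sq_nonneg (f v)) with h | h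
    · rw [← h]; exact mem_insert_self _ _
    · apply mem_insert_of_mem
      rw [hTdef, mem_filter]
      exact ⟨mem_image.2 ⟨v, mem_univ v, rfl⟩, h⟩
  have hba : b ≤ a := by rw [haeq]; exact inf'_le f hua
  have hma : m ≤ a ^ 2 := by rw [haeq]; exact inf'_le _ hua
  have hmb : m ≤ b ^ 2 := by rw [hbeq]; exact inf'_le _ hub
  have hm0 : 0 ≤ m := Finset.le_inf' he _ (fun v _ => sq_nonneg (f v))
  have hmemA : a ^ 2 ∈ insert (0:ℝ) T := by rw [haeq]; exact hgrid ua
  have hmemB : b ^ 2 ∈ insert (0:ℝ) T := by rw [hbeq]; exact hgrid ub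
  have hmemM : m ∈ insert (0:ℝ) T := by rw [hmeq]; exact hgrid um
  have hσ0 : 0 ≤ σ := Finset.sum_nonneg (fun v _ => sq_nonneg (f v))
  have hs2nn : 0 ≤ s2 := Real.sqrt_nonneg _
  have hs2sq : s2 ^ 2 = 2 * σ := Real.sq_sqrt (by linarith)
  have hσa : a ^ 2 ≤ σ := by
    rw [haeq]; exact Finset.single_le_sum (fun v _ => sq_nonneg (f v)) hua
  have hσb : b ^ 2 ≤ σ := by
    rw [hbeq]; exact Finset.single_le_sum (fun v _ => sq_nonneg (f v)) hub
  have habs : |a| ≤ s2 := by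
    rw [← Real.sqrt_sq_eq_abs]
    exact Real.sqrt_le_sqrt (by nlinarith)
  have hbbs : |b| ≤ s2 := by
    rw [← Real.sqrt_sq_eq_abs]
    exact Real.sqrt_le_sqrt (by nlinarith)
  -- rewrite the indicator in terms of a, b, m
  have hrw : ∀ t ∈ T, edgeInd f e t =
      (if a < 0 ∧ t ≤ m then (2:ℝ) else 0) + (if 0 < b ∧ t ≤ m then (2:ℝ) else 0) +
      (if (b < 0 ∧ t ≤ b ^ 2) ∧ m < t ∧ ¬(0 < a ∧ t ≤ a ^ 2) then (1:ℝ) else 0) +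
      (if (0 < a ∧ t ≤ a ^ 2) ∧ m < t ∧ ¬(b < 0 ∧ t ≤ b ^ 2) then (1:ℝ) else 0) := by
    intro t ht
    have ht0 := hT t ht
    rw [edgeInd]
    congr 1
    congr 1
    congr 1
    · apply if_congr _ rfl rfl
      constructor
      · rintro ⟨-, -, h3⟩
        exact (L_inter_compl_empty he).1 h3
      · intro h
        have h3 := (L_inter_compl_empty he).2 h
        have hne : (e ∩ Lset f t).Nonempty := by
          rw [L_inter_nonempty he]
          exact ⟨lt_of_le_of_lt hba h.1, le_trans h.2 hmb⟩
        exact ⟨hne, hne, h3⟩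
    · apply if_congr _ rfl rfl
      constructor
      · rintro ⟨-, -, h3⟩
        exact (R_inter_compl_empty he).1 h3
      · intro h
        have h3 := (R_inter_compl_empty he).2 h
        have hne : (e ∩ Rset f t).Nonempty := by
          rw [R_inter_nonempty he]
          exact ⟨lt_of_lt_of_le h.1 hba, le_trans h.2 hma⟩
        exact ⟨hne, hne, h3⟩
    · exact if_congr (and_congr (L_inter_nonempty he)
        (and_congr (mid_inter_nonempty he ht0) (R_inter_empty he))) rfl rfl
    · exact if_congr (and_congr (R_inter_nonempty he)
        (and_congr (mid_inter_nonempty he ht0) (L_inter_empty he))) rfl rfl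
  rw [Finset.sum_congr rfl (fun t ht => by rw [hrw t ht])]
  simp only [mul_add]
  rw [Finset.sum_add_distrib, Finset.sum_add_distrib, Finset.sum_add_distrib]
  by_cases ha : a < 0
  · -- all values negative
    have hb : b < 0 := lt_of_le_of_lt hba ha
    have hS1 : ∑ t ∈ T, (t - prevT T t) * (if a < 0 ∧ t ≤ m then (2:ℝ) else 0) = 2 * m := by
      rw [Finset.sum_congr rfl
        (fun t ht => by rw [if_congr (and_iff_right ha) rfl rfl])]
      exact helperA T hT hmemM 2
    have hS2 : ∑ t ∈ T, (t - prevT T t) * (if 0 < b ∧ t ≤ m then (2:ℝ) else 0) = 0 := by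
      apply helper0
      rintro t ht ⟨h1, -⟩; linarith
    have hS3 : ∑ t ∈ T, (t - prevT T t) *
        (if (b < 0 ∧ t ≤ b ^ 2) ∧ m < t ∧ ¬(0 < a ∧ t ≤ a ^ 2) then (1:ℝ) else 0)
        = 1 * (b ^ 2 - m) := by
      rw [Finset.sum_congr rfl (fun t ht => by
        rw [if_congr (show ((b < 0 ∧ t ≤ b ^ 2) ∧ m < t ∧ ¬(0 < a ∧ t ≤ a ^ 2)) ↔
            (m < t ∧ t ≤ b ^ 2) by
          constructor
          · rintro ⟨⟨-, h2⟩, h3, -⟩; exact ⟨h3, h2⟩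
          · rintro ⟨h3, h2⟩
            exact ⟨⟨hb, h2⟩, h3, by rintro ⟨h4, -⟩; linarith⟩) rfl rfl])]
      exact helperB T hT hmemM hmemB hmb 1
    have hS4 : ∑ t ∈ T, (t - prevT T t) *
        (if (0 < a ∧ t ≤ a ^ 2) ∧ m < t ∧ ¬(b < 0 ∧ t ≤ b ^ 2) then (1:ℝ) else 0) = 0 := by
      apply helper0
      rintro t ht ⟨⟨h1, -⟩, -⟩; linarith
    rw [hS1, hS2, hS3, hS4]
    rw [abs_of_neg (by linarith : a + b < 0)]
    have hyb : -b ≤ s2 := le_trans (neg_le_abs b) hbbs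
    nlinarith [mul_le_mul_of_nonneg_left hyb (show (0:ℝ) ≤ -(a + b) by linarith),
      mul_nonneg (neg_nonneg.2 ha.le) (sub_nonneg.2 hba)]
  · by_cases hb : 0 < b
    · -- all values positive
      have ha' : 0 < a := lt_of_lt_of_le hb hba
      have hS1 : ∑ t ∈ T, (t - prevT T t) * (if a < 0 ∧ t ≤ m then (2:ℝ) else 0) = 0 := by
        apply helper0
        rintro t ht ⟨h1, -⟩; linarith
      have hS2 : ∑ t ∈ T, (t - prevT T t) * (if 0 < b ∧ t ≤ m then (2:ℝ) else 0) = 2 * m := by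
        rw [Finset.sum_congr rfl
          (fun t ht => by rw [if_congr (and_iff_right hb) rfl rfl])]
        exact helperA T hT hmemM 2
      have hS3 : ∑ t ∈ T, (t - prevT T t) *
          (if (b < 0 ∧ t ≤ b ^ 2) ∧ m < t ∧ ¬(0 < a ∧ t ≤ a ^ 2) then (1:ℝ) else 0) = 0 := by
        apply helper0
        rintro t ht ⟨⟨h1, -⟩, -⟩; linarith
      have hS4 : ∑ t ∈ T, (t - prevT T t) *
          (if (0 < a ∧ t ≤ a ^ 2) ∧ m < t ∧ ¬(b < 0 ∧ t ≤ b ^ 2) then (1:ℝ) else 0)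
          = 1 * (a ^ 2 - m) := by
        rw [Finset.sum_congr rfl (fun t ht => by
          rw [if_congr (show ((0 < a ∧ t ≤ a ^ 2) ∧ m < t ∧ ¬(b < 0 ∧ t ≤ b ^ 2)) ↔
              (m < t ∧ t ≤ a ^ 2) by
            constructor
            · rintro ⟨⟨-, h2⟩, h3, -⟩; exact ⟨h3, h2⟩
            · rintro ⟨h3, h2⟩
              exact ⟨⟨ha', h2⟩, h3, by rintro ⟨h4, -⟩; linarith⟩) rfl rfl])]
        exact helperB T hT hmemM hmemA hma 1
      rw [hS1, hS2, hS3, hS4]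
      rw [abs_of_pos (by linarith : 0 < a + b)]
      have hya : a ≤ s2 := le_trans (le_abs_self a) habs
      nlinarith [mul_le_mul_of_nonneg_left hya (show (0:ℝ) ≤ a + b by linarith),
        mul_nonneg hb.le (sub_nonneg.2 hba)]
    · -- mixed signs : b ≤ 0 ≤ a
      push_neg at ha hb
      have hS1 : ∑ t ∈ T, (t - prevT T t) * (if a < 0 ∧ t ≤ m then (2:ℝ) else 0) = 0 := by
        apply helper0
        rintro t ht ⟨h1, -⟩; linarith
      have hS2 : ∑ t ∈ T, (t - prevT T t) * (if 0 < b ∧ t ≤ m then (2:ℝ) else 0) = 0 := by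
        apply helper0
        rintro t ht ⟨h1, -⟩; linarith
      rw [hS1, hS2]
      by_cases hb3 : b < 0
      · by_cases ha3 : 0 < a
        · -- strictly mixed
          have hanb : ua ≠ ub := by
            intro hcon
            have : a = b := by rw [haeq, hbeq, hcon]
            linarith
          have hpair : a ^ 2 + b ^ 2 ≤ σ := by
            have hsub : ({ua, ub} : Finset V) ⊆ e := by
              intro x hx
              rcases Finset.mem_insert.1 hx with h | h
              · exact h ▸ hua
              · exact (Finset.mem_singleton.1 h) ▸ hub
            calc a ^ 2 + b ^ 2 = ∑ v ∈ ({ua, ub} : Finset V), f v ^ 2 := by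
                  rw [Finset.sum_pair hanb, haeq, hbeq]
            _ ≤ σ := Finset.sum_le_sum_of_subset_of_nonneg hsub
                  (fun v _ _ => sq_nonneg (f v))
          have hab2 : (a - b) ^ 2 ≤ 2 * σ := by nlinarith [sq_nonneg (a + b), hpair]
          have hdiff : a - b ≤ s2 := by
            have h1 : a - b = Real.sqrt ((a - b) ^ 2) :=
              (Real.sqrt_sq (by linarith)).symm
            rw [h1]
            exact Real.sqrt_le_sqrt hab2
          have hS3' : ∑ t ∈ T, (t - prevT T t) *
              (if (b < 0 ∧ t ≤ b ^ 2) ∧ m < t ∧ ¬(0 < a ∧ t ≤ a ^ 2) then (1:ℝ) else 0)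
              = ∑ t ∈ T, (t - prevT T t) *
              (if a ^ 2 < t ∧ t ≤ b ^ 2 then (1:ℝ) else 0) := by
            apply Finset.sum_congr rfl
            intro t ht
            rw [if_congr (show ((b < 0 ∧ t ≤ b ^ 2) ∧ m < t ∧ ¬(0 < a ∧ t ≤ a ^ 2)) ↔
                (a ^ 2 < t ∧ t ≤ b ^ 2) by
              constructor
              · rintro ⟨⟨-, h2⟩, -, h4⟩
                refine ⟨?_, h2⟩
                by_contra hc
                push_neg at hc
                exact h4 ⟨ha3, hc⟩
              · rintro ⟨h1, h2⟩
                exact ⟨⟨hb3, h2⟩, by linarith, by rintro ⟨-, h4⟩; linarith⟩) rfl rfl]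
          have hS4' : ∑ t ∈ T, (t - prevT T t) *
              (if (0 < a ∧ t ≤ a ^ 2) ∧ m < t ∧ ¬(b < 0 ∧ t ≤ b ^ 2) then (1:ℝ) else 0)
              = ∑ t ∈ T, (t - prevT T t) *
              (if b ^ 2 < t ∧ t ≤ a ^ 2 then (1:ℝ) else 0) := by
            apply Finset.sum_congr rfl
            intro t ht
            rw [if_congr (show ((0 < a ∧ t ≤ a ^ 2) ∧ m < t ∧ ¬(b < 0 ∧ t ≤ b ^ 2)) ↔
                (b ^ 2 < t ∧ t ≤ a ^ 2) by
              constructor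
              · rintro ⟨⟨-, h2⟩, -, h4⟩
                refine ⟨?_, h2⟩
                by_contra hc
                push_neg at hc
                exact h4 ⟨hb3, hc⟩
              · rintro ⟨h1, h2⟩
                exact ⟨⟨ha3, h2⟩, by linarith, by rintro ⟨-, h4⟩; linarith⟩) rfl rfl]
          rw [hS3', hS4']
          rcases lt_trichotomy (a ^ 2) (b ^ 2) with hc | hc | hc
          · rw [helperB T hT hmemA hmemB hc.le 1, helperC T hc 1]
            rw [abs_of_nonpos (show a + b ≤ 0 by nlinarith)]
            nlinarith [mul_le_mul_of_nonneg_left hdiff (show (0:ℝ) ≤ -(a + b) by nlinarith)]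
          · rw [helperB T hT hmemA hmemB hc.le 1, helperB T hT hmemB hmemA hc.ge 1]
            rw [hc]
            nlinarith [abs_nonneg (a + b)]
          · rw [helperC T hc 1, helperB T hT hmemB hmemA hc.le 1]
            rw [abs_of_nonneg (show 0 ≤ a + b by nlinarith)]
            nlinarith [mul_le_mul_of_nonneg_left hdiff (show (0:ℝ) ≤ a + b by nlinarith)]
        · -- a = 0, b < 0
          have ha0 : a = 0 := le_antisymm (not_lt.1 ha3) ha
          have hS3' : ∑ t ∈ T, (t - prevT T t) *
              (if (b < 0 ∧ t ≤ b ^ 2) ∧ m < t ∧ ¬(0 < a ∧ t ≤ a ^ 2) then (1:ℝ) else 0)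
              = 1 * (b ^ 2 - m) := by
            rw [Finset.sum_congr rfl (fun t ht => by
              rw [if_congr (show ((b < 0 ∧ t ≤ b ^ 2) ∧ m < t ∧ ¬(0 < a ∧ t ≤ a ^ 2)) ↔
                  (m < t ∧ t ≤ b ^ 2) by
                constructor
                · rintro ⟨⟨-, h2⟩, h3, -⟩; exact ⟨h3, h2⟩
                · rintro ⟨h3, h2⟩
                  exact ⟨⟨hb3, h2⟩, h3, by rintro ⟨h4, -⟩; linarith⟩) rfl rfl])]
            exact helperB T hT hmemM hmemB hmb 1
          have hS4' : ∑ t ∈ T, (t - prevT T t) *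
              (if (0 < a ∧ t ≤ a ^ 2) ∧ m < t ∧ ¬(b < 0 ∧ t ≤ b ^ 2) then (1:ℝ) else 0)
              = 0 := by
            apply helper0
            rintro t ht ⟨⟨h1, -⟩, -⟩; linarith
          rw [hS3', hS4', ha0]
          have hyb : -b ≤ s2 := le_trans (neg_le_abs b) hbbs
          rw [show |(0:ℝ) + b| = -b by rw [zero_add, abs_of_neg hb3]]
          nlinarith [mul_le_mul_of_nonneg_left hyb (show (0:ℝ) ≤ -b by linarith)]
      · -- b = 0 ≤ a
        have hb0 : b = 0 := le_antisymm hb (not_lt.1 hb3)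
        have hS3' : ∑ t ∈ T, (t - prevT T t) *
            (if (b < 0 ∧ t ≤ b ^ 2) ∧ m < t ∧ ¬(0 < a ∧ t ≤ a ^ 2) then (1:ℝ) else 0)
            = 0 := by
          apply helper0
          rintro t ht ⟨⟨h1, -⟩, -⟩; linarith
        by_cases ha3 : 0 < a
        · have hS4' : ∑ t ∈ T, (t - prevT T t) *
              (if (0 < a ∧ t ≤ a ^ 2) ∧ m < t ∧ ¬(b < 0 ∧ t ≤ b ^ 2) then (1:ℝ) else 0)
              = 1 * (a ^ 2 - m) := by
            rw [Finset.sum_congr rfl (fun t ht => by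
              rw [if_congr (show ((0 < a ∧ t ≤ a ^ 2) ∧ m < t ∧ ¬(b < 0 ∧ t ≤ b ^ 2)) ↔
                  (m < t ∧ t ≤ a ^ 2) by
                constructor
                · rintro ⟨⟨-, h2⟩, h3, -⟩; exact ⟨h3, h2⟩
                · rintro ⟨h3, h2⟩
                  exact ⟨⟨ha3, h2⟩, h3, by rintro ⟨h4, -⟩; linarith⟩) rfl rfl])]
            exact helperB T hT hmemM hmemA hma 1
          rw [hS3', hS4', hb0]
          have hya : a ≤ s2 := le_trans (le_abs_self a) habs
          rw [show |a + (0:ℝ)| = a by rw [add_zero, abs_of_pos ha3]]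
          nlinarith [mul_le_mul_of_nonneg_left hya (show (0:ℝ) ≤ a by linarith)]
        · have ha0 : a = 0 := le_antisymm (not_lt.1 ha3) ha
          have hS4' : ∑ t ∈ T, (t - prevT T t) *
              (if (0 < a ∧ t ≤ a ^ 2) ∧ m < t ∧ ¬(b < 0 ∧ t ≤ b ^ 2) then (1:ℝ) else 0)
              = 0 := by
            apply helper0
            rintro t ht ⟨⟨h1, -⟩, -⟩; linarith
          rw [hS3', hS4', ha0, hb0]
          simp [hs2nn]

set_option maxHeartbeats 1000000 in
theorem stmt_10 {V : Type*} [Fintype V] [DecidableEq V]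
    (E : Finset (Finset V)) (w : Finset V → ℝ) (hw : ∀ e ∈ E, 0 < w e)
    (hE : ∀ e ∈ E, e.Nonempty)
    (hdegpos : ∀ v, 0 < degH E w v)
    (f : V → ℝ) (hf : f ≠ 0) (γ : ℝ) (hγ : discH E w hE (degH E w) f = γ) :
    ∃ L R : Finset V, Disjoint L R ∧ (L ∪ R).Nonempty ∧
      betaH E w L R ≤ Real.sqrt (2 * γ) := by
  set T : Finset ℝ := (Finset.univ.image (fun v => f v ^ 2)).filter (fun t => 0 < t)
    with hTdef
  have hT : ∀ t ∈ T, 0 < t := fun t ht => (Finset.mem_filter.1 ht).2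
  have hgrid : ∀ v : V, f v ^ 2 ∈ insert (0:ℝ) T := by
    intro v
    rcases eq_or_lt_of_le (sq_nonneg (f v)) with h | h
    · rw [← h]; exact mem_insert_self _ _
    · apply mem_insert_of_mem
      rw [hTdef, mem_filter]
      exact ⟨mem_image.2 ⟨v, mem_univ v, rfl⟩, h⟩
  obtain ⟨v0, hv0⟩ : ∃ v, f v ≠ 0 := Function.ne_iff.1 hf
  set Den := ∑ v, degH E w v * f v ^ 2 with hDendef
  have hDenpos : 0 < Den := by
    apply Finset.sum_pos'
    · exact fun v _ => mul_nonneg (hdegpos v).le (sq_nonneg _)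
    · exact ⟨v0, mem_univ _, mul_pos (hdegpos v0) (pow_two_pos_of_ne_zero hv0)⟩
  have hNum : (∑ e ∈ E.attach, w e.1 *
      (e.1.sup' (hE e.1 e.2) f + e.1.inf' (hE e.1 e.2) f) ^ 2) = γ * Den := by
    rw [discH] at hγ
    rw [← hγ]
    rw [← hDendef, div_mul_cancel₀ _ hDenpos.ne']
  have hNumnn : 0 ≤ (∑ e ∈ E.attach, w e.1 *
      (e.1.sup' (hE e.1 e.2) f + e.1.inf' (hE e.1 e.2) f) ^ 2) :=
    Finset.sum_nonneg (fun e _ => mul_nonneg (hw e.1 e.2).le (sq_nonneg _))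
  have hγ0 : 0 ≤ γ := by
    have h := hNumnn
    rw [hNum] at h
    by_contra hcg
    push_neg at hcg
    nlinarith
  -- the numerator of betaH at threshold t, edge by edge
  have hnum_eq : ∀ t : ℝ,
      2 * cutw E w (Lset f t) (Lset f t) (Lset f t)ᶜ +
        2 * cutw E w (Rset f t) (Rset f t) (Rset f t)ᶜ +
        cutw E w (Lset f t) (Lset f t ∪ Rset f t)ᶜ (Rset f t) +
        cutw E w (Rset f t) (Lset f t ∪ Rset f t)ᶜ (Lset f t)
      = ∑ e ∈ E.attach, w e.1 * edgeInd f e.1 t := by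
    intro t
    have h1 : ∀ (A B C : Finset V), cutw E w A B C = ∑ e ∈ E.attach,
        (if (e.1 ∩ A).Nonempty ∧ (e.1 ∩ B).Nonempty ∧ e.1 ∩ C = ∅ then w e.1 else 0) := by
      intro A B C
      rw [cutw]
      exact (Finset.sum_attach E _).symm
    rw [h1, h1, h1, h1, Finset.mul_sum, Finset.mul_sum,
      ← Finset.sum_add_distrib, ← Finset.sum_add_distrib, ← Finset.sum_add_distrib]
    apply Finset.sum_congr rfl
    intro e _
    rw [edgeInd]
    split_ifs <;> ring
  -- (A) total volume identity
  have hvol_sum : ∑ t ∈ T, (t - prevT T t) * volH E w (Lset f t ∪ Rset f t) = Den := by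
    have hv : ∀ t : ℝ, volH E w (Lset f t ∪ Rset f t) =
        ∑ v : V, (if (f v < 0 ∧ t ≤ f v ^ 2) ∨ (0 < f v ∧ t ≤ f v ^ 2)
          then degH E w v else 0) := by
      intro t
      rw [volH, Lset, Rset, ← Finset.filter_or, Finset.sum_filter]
    calc ∑ t ∈ T, (t - prevT T t) * volH E w (Lset f t ∪ Rset f t)
        = ∑ t ∈ T, ∑ v : V, (t - prevT T t) *
          (if (f v < 0 ∧ t ≤ f v ^ 2) ∨ (0 < f v ∧ t ≤ f v ^ 2)
            then degH E w v else 0) := by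
          apply Finset.sum_congr rfl
          intro t _
          rw [hv t, Finset.mul_sum]
    _ = ∑ v : V, ∑ t ∈ T, (t - prevT T t) *
          (if (f v < 0 ∧ t ≤ f v ^ 2) ∨ (0 < f v ∧ t ≤ f v ^ 2)
            then degH E w v else 0) := Finset.sum_comm
    _ = ∑ v : V, degH E w v * f v ^ 2 := by
          apply Finset.sum_congr rfl
          intro v _
          by_cases hv0' : f v = 0
          · rw [helper0 T (fun t ht => ?_), hv0']
            · ring
            · rintro (⟨h1, -⟩ | ⟨h1, -⟩) <;> rw [hv0'] at h1 <;> exact absurd h1 (lt_irrefl 0)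
          · rw [Finset.sum_congr rfl (fun t ht => by
              rw [if_congr (show ((f v < 0 ∧ t ≤ f v ^ 2) ∨ (0 < f v ∧ t ≤ f v ^ 2)) ↔
                  (t ≤ f v ^ 2) by
                constructor
                · rintro (⟨-, h2⟩ | ⟨-, h2⟩) <;> exact h2
                · intro h2
                  rcases lt_trichotomy (f v) 0 with h0 | h0 | h0
                  · exact Or.inl ⟨h0, h2⟩
                  · exact absurd h0 hv0'
                  · exact Or.inr ⟨h0, h2⟩) rfl rfl])]
            exact helperA T hT (hgrid v) (degH E w v)
    _ = Den := rfl
  -- Den as an edge sum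
  have hDen2 : Den = ∑ e ∈ E.attach, w e.1 * ∑ v ∈ e.1, f v ^ 2 := by
    rw [hDendef]
    calc ∑ v, degH E w v * f v ^ 2
        = ∑ v : V, ∑ e ∈ E, (if v ∈ e then w e else 0) * f v ^ 2 := by
          apply Finset.sum_congr rfl
          intro v _
          rw [degH, Finset.sum_mul]
          apply Finset.sum_congr rfl
          intro e _
          by_cases h : v ∈ e <;> simp [h]
    _ = ∑ e ∈ E, ∑ v : V, (if v ∈ e then w e else 0) * f v ^ 2 := Finset.sum_comm
    _ = ∑ e ∈ E, w e * ∑ v ∈ e, f v ^ 2 := by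
          apply Finset.sum_congr rfl
          intro e _
          rw [Finset.mul_sum]
          rw [show ∑ v : V, (if v ∈ e then w e else 0) * f v ^ 2
              = ∑ v : V, (if v ∈ e then w e * f v ^ 2 else 0) by
            apply Finset.sum_congr rfl
            intro v _
            split_ifs <;> ring]
          rw [Finset.sum_ite_mem, Finset.univ_inter]
    _ = ∑ e ∈ E.attach, w e.1 * ∑ v ∈ e.1, f v ^ 2 := (Finset.sum_attach E _).symm
  -- (B) numerator bound
  have hnum_sum : ∑ t ∈ T, (t - prevT T t) * (∑ e ∈ E.attach, w e.1 * edgeInd f e.1 t)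
      ≤ Real.sqrt (2 * γ) * Den := by
    have hswap : ∑ t ∈ T, (t - prevT T t) * (∑ e ∈ E.attach, w e.1 * edgeInd f e.1 t)
        = ∑ e ∈ E.attach, w e.1 * (∑ t ∈ T, (t - prevT T t) * edgeInd f e.1 t) := by
      calc ∑ t ∈ T, (t - prevT T t) * (∑ e ∈ E.attach, w e.1 * edgeInd f e.1 t)
          = ∑ t ∈ T, ∑ e ∈ E.attach, w e.1 * ((t - prevT T t) * edgeInd f e.1 t) := by
            apply Finset.sum_congr rfl
            intro t _
            rw [Finset.mul_sum]
            apply Finset.sum_congr rfl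
            intro e _
            ring
      _ = ∑ e ∈ E.attach, ∑ t ∈ T, w e.1 * ((t - prevT T t) * edgeInd f e.1 t) :=
            Finset.sum_comm
      _ = _ := by
            apply Finset.sum_congr rfl
            intro e _
            rw [Finset.mul_sum]
    rw [hswap]
    have hstep2 : ∑ e ∈ E.attach, w e.1 * (∑ t ∈ T, (t - prevT T t) * edgeInd f e.1 t)
        ≤ ∑ e ∈ E.attach, w e.1 * (|e.1.sup' (hE e.1 e.2) f + e.1.inf' (hE e.1 e.2) f| *
            Real.sqrt (2 * ∑ v ∈ e.1, f v ^ 2)) := by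
      apply Finset.sum_le_sum
      intro e _
      exact mul_le_mul_of_nonneg_left (per_edge f T hTdef e.1 (hE e.1 e.2)) (hw e.1 e.2).le
    refine le_trans hstep2 ?_
    have hCS := Real.sum_mul_le_sqrt_mul_sqrt E.attach
      (fun e => Real.sqrt (w e.1) * |e.1.sup' (hE e.1 e.2) f + e.1.inf' (hE e.1 e.2) f|)
      (fun e => Real.sqrt (w e.1) * Real.sqrt (2 * ∑ v ∈ e.1, f v ^ 2))
    have hxy : ∑ e ∈ E.attach,
        (Real.sqrt (w e.1) * |e.1.sup' (hE e.1 e.2) f + e.1.inf' (hE e.1 e.2) f|) *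
          (Real.sqrt (w e.1) * Real.sqrt (2 * ∑ v ∈ e.1, f v ^ 2))
        = ∑ e ∈ E.attach, w e.1 * (|e.1.sup' (hE e.1 e.2) f + e.1.inf' (hE e.1 e.2) f| *
            Real.sqrt (2 * ∑ v ∈ e.1, f v ^ 2)) := by
      apply Finset.sum_congr rfl
      intro e _
      have h : Real.sqrt (w e.1) * Real.sqrt (w e.1) = w e.1 :=
        Real.mul_self_sqrt (hw e.1 e.2).le
      linear_combination (|e.1.sup' (hE e.1 e.2) f + e.1.inf' (hE e.1 e.2) f| *
        Real.sqrt (2 * ∑ v ∈ e.1, f v ^ 2)) * h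
    have hx2 : ∑ e ∈ E.attach,
        (Real.sqrt (w e.1) * |e.1.sup' (hE e.1 e.2) f + e.1.inf' (hE e.1 e.2) f|) ^ 2
        = γ * Den := by
      rw [← hNum]
      apply Finset.sum_congr rfl
      intro e _
      rw [mul_pow, Real.sq_sqrt (hw e.1 e.2).le, sq_abs]
    have hy2 : ∑ e ∈ E.attach,
        (Real.sqrt (w e.1) * Real.sqrt (2 * ∑ v ∈ e.1, f v ^ 2)) ^ 2 = 2 * Den := by
      rw [hDen2, Finset.mul_sum]
      apply Finset.sum_congr rfl
      intro e _
      rw [mul_pow, Real.sq_sqrt (hw e.1 e.2).le,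
        Real.sq_sqrt (by positivity : (0:ℝ) ≤ 2 * ∑ v ∈ e.1, f v ^ 2)]
      ring
    rw [hxy, hx2, hy2] at hCS
    refine le_trans hCS (le_of_eq ?_)
    have hss : Real.sqrt Den * Real.sqrt Den = Den := Real.mul_self_sqrt hDenpos.le
    rw [Real.sqrt_mul hγ0 Den, Real.sqrt_mul (by norm_num : (0:ℝ) ≤ 2) Den,
      Real.sqrt_mul (by norm_num : (0:ℝ) ≤ 2) γ]
    linear_combination (Real.sqrt 2 * Real.sqrt γ) * hss
  -- (C) extraction
  have hTne : T.Nonempty := by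
    refine ⟨f v0 ^ 2, ?_⟩
    rw [hTdef, mem_filter]
    exact ⟨mem_image.2 ⟨v0, mem_univ v0, rfl⟩, pow_two_pos_of_ne_zero hv0⟩
  have hexists : ∃ t ∈ T, (∑ e ∈ E.attach, w e.1 * edgeInd f e.1 t)
      ≤ Real.sqrt (2 * γ) * volH E w (Lset f t ∪ Rset f t) := by
    by_contra hc
    push_neg at hc
    have hlt : ∑ t ∈ T, (t - prevT T t) * (Real.sqrt (2 * γ) *
        volH E w (Lset f t ∪ Rset f t))
        < ∑ t ∈ T, (t - prevT T t) * (∑ e ∈ E.attach, w e.1 * edgeInd f e.1 t) := by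
      apply Finset.sum_lt_sum_of_nonempty hTne
      intro t ht
      exact mul_lt_mul_of_pos_left (hc t ht) (sub_pos.2 (prevT_lt (hT t ht)))
    have heq : ∑ t ∈ T, (t - prevT T t) * (Real.sqrt (2 * γ) *
        volH E w (Lset f t ∪ Rset f t)) = Real.sqrt (2 * γ) * Den := by
      rw [← hvol_sum, Finset.mul_sum]
      apply Finset.sum_congr rfl
      intro t _
      ring
    rw [heq] at hlt
    linarith
  obtain ⟨t, htT, hle⟩ := hexists
  refine ⟨Lset f t, Rset f t, ?_, ?_, ?_⟩
  · rw [Finset.disjoint_left]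
    intro v hvL hvR
    rw [mem_Lset] at hvL
    rw [mem_Rset] at hvR
    linarith [hvL.1, hvR.1]
  · obtain ⟨v, -, hveq⟩ := mem_image.1 (mem_filter.1 (hTdef ▸ htT)).1
    have ht0 : 0 < t := hT t htT
    have hfv : f v ≠ 0 := by
      intro h
      rw [h] at hveq
      simp at hveq
      linarith
    rcases lt_trichotomy (f v) 0 with h0 | h0 | h0
    · exact ⟨v, Finset.mem_union_left _ (mem_Lset.2 ⟨h0, le_of_eq hveq.symm⟩)⟩
    · exact absurd h0 hfv
    · exact ⟨v, Finset.mem_union_right _ (mem_Rset.2 ⟨h0, le_of_eq hveq.symm⟩)⟩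
  · have hne : (Lset f t ∪ Rset f t).Nonempty := by
      obtain ⟨v, -, hveq⟩ := mem_image.1 (mem_filter.1 (hTdef ▸ htT)).1
      have ht0 : 0 < t := hT t htT
      have hfv : f v ≠ 0 := by
        intro h
        rw [h] at hveq
        simp at hveq
        linarith
      rcases lt_trichotomy (f v) 0 with h0 | h0 | h0
      · exact ⟨v, Finset.mem_union_left _ (mem_Lset.2 ⟨h0, le_of_eq hveq.symm⟩)⟩
      · exact absurd h0 hfv
      · exact ⟨v, Finset.mem_union_right _ (mem_Rset.2 ⟨h0, le_of_eq hveq.symm⟩)⟩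
    have hvolpos : 0 < volH E w (Lset f t ∪ Rset f t) := by
      rw [volH]
      exact Finset.sum_pos (fun v _ => hdegpos v) hne
    rw [betaH, div_le_iff₀ hvolpos]
    calc 2 * cutw E w (Lset f t) (Lset f t) (Lset f t)ᶜ +
        2 * cutw E w (Rset f t) (Rset f t) (Rset f t)ᶜ +
        cutw E w (Lset f t) (Lset f t ∪ Rset f t)ᶜ (Rset f t) +
        cutw E w (Rset f t) (Lset f t ∪ Rset f t)ᶜ (Lset f t)
        = ∑ e ∈ E.attach, w e.1 * edgeInd f e.1 t := hnum_eq t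
    _ ≤ Real.sqrt (2 * γ) * volH E w (Lset f t ∪ Rset f t) := hle
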